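/- Let G be a finite simple graph on a nonempty vertex set V that is vertex-transitive, and let J ∈ ℝ^V be any real vector. Then the infimum, over all H-feasible pairs (v, M) for G, of Σ_α J_α v_α, is less than or equal to −(Σ_α |J_α|) · |V|^{−1/2} · √(ϑ(G)). -/

import Mathlib

open scoped BigOperators

/-- A theta-feasible matrix for `G`: real symmetric PSD with trace 1 and vanishing on edges. -/
def ThetaFeasible {V : Type*} [Fintype V] (G : SimpleGraph V) (M : Matrix V V ℝ) : Prop :=
  M.IsSymm ∧ M.PosSemidef ∧ M.trace = 1 ∧ ∀ a b, G.Adj a b → M a b = 0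

/-- The Lovász theta function of `G`. -/
noncomputable def lovaszTheta {V : Type*} [Fintype V] (G : SimpleGraph V) : ℝ :=
  sSup {x : ℝ | ∃ M : Matrix V V ℝ, ThetaFeasible G M ∧ x = ∑ a, ∑ b, M a b}

/-- An H²-feasible matrix for `G`: real symmetric PSD, unit diagonal, vanishing on edges. -/
def H2Feasible {V : Type*} [Fintype V] (G : SimpleGraph V) (M : Matrix V V ℝ) : Prop :=
  M.IsSymm ∧ M.PosSemidef ∧ (∀ a, M a a = 1) ∧ ∀ a b, G.Adj a b → M a b = 0

/-- The block matrix N = [[1, vᵀ],[v, M]]. -/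
def blockN {V : Type*} [Fintype V] [DecidableEq V] (v : V → ℝ) (M : Matrix V V ℝ) :
    Matrix (Unit ⊕ V) (Unit ⊕ V) ℝ :=
  Matrix.fromBlocks 1 (Matrix.of fun _ b => v b) (Matrix.of fun a _ => v a) M

/-- An H-feasible pair for `G`. -/
def HFeasible {V : Type*} [Fintype V] [DecidableEq V] (G : SimpleGraph V)
    (v : V → ℝ) (M : Matrix V V ℝ) : Prop :=
  H2Feasible G M ∧ (blockN v M).PosSemidef

/-- `G` is vertex-transitive. -/
def VertexTransitive {V : Type*} (G : SimpleGraph V) : Prop :=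
  ∀ u w : V, ∃ g : G ≃g G, g u = w

set_option maxHeartbeats 1000000

section Aux

variable {V : Type*} [Fintype V]

lemma aux_psd_quad (M : Matrix V V ℝ) (h : M.PosSemidef) (x : V → ℝ) :
    0 ≤ ∑ a, x a * ∑ b, M a b * x b := by
  have := h.dotProduct_mulVec_nonneg x
  simpa [dotProduct, Matrix.mulVec] using this

lemma aux_psd_of_quad (M : Matrix V V ℝ) (hs : M.IsSymm)
    (h : ∀ x : V → ℝ, 0 ≤ ∑ a, x a * ∑ b, M a b * x b) : M.PosSemidef := by
  refine Matrix.PosSemidef.of_dotProduct_mulVec_nonneg (by rwa [Matrix.IsHermitian, Matrix.conjTranspose_eq_transpose_of_trivial]) (fun x => by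
    simpa [dotProduct, Matrix.mulVec] using h x)

lemma aux_sum_nonneg_of_psd (M : Matrix V V ℝ) (h : M.PosSemidef) :
    0 ≤ ∑ a, ∑ b, M a b := by
  simpa using aux_psd_quad M h 1

lemma aux_psd_smul (M : Matrix V V ℝ) (h : M.PosSemidef) (c : ℝ) (hc : 0 ≤ c) :
    (c • M).PosSemidef := by
  refine Matrix.PosSemidef.of_dotProduct_mulVec_nonneg ?_ fun x => ?_
  · have := h.1
    simp only [Matrix.IsHermitian] at this ⊢
    rw [Matrix.conjTranspose_smul, this]
    simp
  · have := h.dotProduct_mulVec_nonneg x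
    rw [Matrix.smul_mulVec, dotProduct_smul]
    exact mul_nonneg hc this

lemma aux_exists_regular [DecidableEq V] [Nonempty V] (G : SimpleGraph V)
    (hG : VertexTransitive G) (M' : Matrix V V ℝ)
    (hM' : ThetaFeasible G M') (x : ℝ) (hx : x = ∑ a, ∑ b, M' a b) :
    ∃ M : Matrix V V ℝ, H2Feasible G M ∧ ∀ a, ∑ b, M a b = x := by
  obtain ⟨hsym, hpsd, htr, hedge⟩ := hM'
  haveI : Fintype (G ≃g G) :=
    Fintype.ofInjective (fun g => (g : V ≃ V))
      (fun a b h => RelIso.toEquiv_injective h)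
  set k : ℕ := Fintype.card (G ≃g G) with hk
  have hk0 : 0 < k := Fintype.card_pos_iff.mpr ⟨RelIso.refl _⟩
  set n : ℕ := Fintype.card V with hn
  have hn0 : 0 < n := Fintype.card_pos
  set A : Matrix V V ℝ := ∑ g : G ≃g G, M'.submatrix g g with hA
  have hAapp : ∀ a b, A a b = ∑ g : G ≃g G, M' (g a) (g b) := by
    intro a b
    simp [hA, Matrix.sum_apply, Matrix.submatrix_apply]
  -- invariance
  have hinv : ∀ (h : G ≃g G) (a b : V), A (h a) (h b) = A a b := by
    intro h a b
    rw [hAapp, hAapp]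
    exact Fintype.sum_equiv
      ⟨fun g => h.trans g, fun g => h.symm.trans g,
        fun g => by ext v; simp, fun g => by ext v; simp⟩
      (fun g => M' (g (h a)) (g (h b))) (fun g => M' (g a) (g b)) (fun g => rfl) |>.symm
      |>.symm
  -- diagonal constant
  have hdiag : ∀ a b, A a a = A b b := by
    intro a b
    obtain ⟨h, hh⟩ := hG a b
    rw [← hh, hinv]
  -- row sums constant
  have hrowc : ∀ a b, ∑ c, A a c = ∑ c, A b c := by
    intro a b
    obtain ⟨h, hh⟩ := hG a b
    rw [← hh]
    have h1 : ∑ c, A (h a) c = ∑ c, A (h a) (h c) :=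
      (Fintype.sum_equiv h.toEquiv (fun c => A (h a) (h c)) (fun c => A (h a) c)
        (fun c => rfl)).symm
    rw [h1]
    exact Finset.sum_congr rfl fun c _ => (hinv h a c).symm
  -- trace of A
  have htrA : ∑ a, A a a = (k : ℝ) := by
    have h0 : ∑ a, A a a = ∑ g : G ≃g G, ∑ a, M' (g a) (g a) := by
      simp only [hAapp]; exact Finset.sum_comm
    rw [h0]
    have h1 : ∀ g : G ≃g G, ∑ a, M' (g a) (g a) = 1 := by
      intro g
      rw [Fintype.sum_equiv g.toEquiv (fun a => M' (g a) (g a)) (fun a => M' a a) (fun a => rfl)]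
      simpa [Matrix.trace, Matrix.diag] using htr
    simp [h1]
    exact Fintype.card_congr (Equiv.refl _)
  -- total sum of A
  have hsumA : ∑ a, ∑ b, A a b = (k : ℝ) * x := by
    have h0 : ∑ a, ∑ b, A a b = ∑ g : G ≃g G, ∑ a, ∑ b, M' (g a) (g b) := by
      simp only [hAapp]
      rw [show (∑ a, ∑ b, ∑ g : G ≃g G, M' (g a) (g b))
          = ∑ a, ∑ g : G ≃g G, ∑ b, M' (g a) (g b) from
        Finset.sum_congr rfl fun a _ => Finset.sum_comm]
      exact Finset.sum_comm
    rw [h0]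
    have h1 : ∀ g : G ≃g G, ∑ a, ∑ b, M' (g a) (g b) = x := by
      intro g
      rw [hx]
      have h2 : ∀ a, ∑ b, M' (g a) (g b) = ∑ b, M' (g a) b := fun a =>
        Fintype.sum_equiv g.toEquiv (fun b => M' (g a) (g b)) (fun b => M' (g a) b) (fun b => rfl)
      simp only [h2]
      exact Fintype.sum_equiv g.toEquiv (fun a => ∑ b, M' (g a) b) (fun a => ∑ b, M' a b)
        (fun a => rfl)
    simp [h1]
    exact Or.inl (Fintype.card_congr (Equiv.refl _))
  -- diagonal value
  have hdval : ∀ a, A a a = (k : ℝ) / n := by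
    intro a
    have h0 : ∑ b, A b b = (n : ℝ) * A a a := by
      rw [Finset.sum_congr rfl fun b _ => hdiag b a]
      rw [Finset.sum_const, Finset.card_univ, nsmul_eq_mul, hn]
    rw [htrA] at h0
    field_simp
    linarith [h0]
  -- row sum value
  have hrval : ∀ a, ∑ b, A a b = (k : ℝ) * x / n := by
    intro a
    have h0 : ∑ c, ∑ b, A c b = (n : ℝ) * ∑ b, A a b := by
      rw [Finset.sum_congr rfl fun c _ => hrowc c a]
      rw [Finset.sum_const, Finset.card_univ, nsmul_eq_mul, hn]
    rw [hsumA] at h0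
    field_simp
    linarith [h0]
  have hkR : (0:ℝ) < (k : ℝ) := by exact_mod_cast hk0
  have hnR : (0:ℝ) < (n : ℝ) := by exact_mod_cast hn0
  -- the normalized matrix
  refine ⟨((n : ℝ) / k) • A, ⟨?_, ?_, ?_, ?_⟩, ?_⟩
  · -- symm
    refine Matrix.IsSymm.smul ?_ _
    apply Matrix.IsSymm.ext
    intro i j
    rw [hAapp, hAapp]
    exact Finset.sum_congr rfl fun g _ => (hsym.apply (g i) (g j))
  · -- psd
    have hApsd : A.PosSemidef := by
      rw [hA]
      apply Finset.sum_induction _ _ (fun a b ha hb => ha.add hb) Matrix.PosSemidef.zero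
      intro g _
      exact hpsd.submatrix g
    exact aux_psd_smul A hApsd _ (by positivity)
  · intro a
    rw [Matrix.smul_apply, hdval a, smul_eq_mul]
    field_simp
  · intro a b hab
    have h0 : A a b = 0 := by
      rw [hAapp]
      exact Finset.sum_eq_zero fun g _ => hedge _ _ (g.map_adj_iff.mpr hab)
    rw [Matrix.smul_apply, h0, smul_eq_mul, mul_zero]
  · intro a
    have h0 : ∑ b, (((n : ℝ) / k) • A) a b = ((n : ℝ)/k) * ∑ b, A a b := by
      rw [Finset.mul_sum]
      exact Finset.sum_congr rfl fun b _ => rfl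
    rw [h0, hrval a]
    field_simp

lemma aux_key_ineq [Nonempty V] (M : Matrix V V ℝ) (hpsd : M.PosSemidef) (hsym : M.IsSymm)
    (x : ℝ) (hrow : ∀ a, ∑ b, M a b = x) (z : V → ℝ) :
    x / (Fintype.card V : ℝ) * (∑ a, z a) ^ 2 ≤ ∑ a, z a * ∑ b, M a b * z b := by
  set n : ℝ := (Fintype.card V : ℝ) with hn
  have hn0 : 0 < n := by
    rw [hn]; exact_mod_cast Fintype.card_pos
  set σ : ℝ := ∑ a, z a with hσ
  set w : V → ℝ := fun a => z a - σ / n with hw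
  set S : V → ℝ := fun a => ∑ b, M a b * z b with hS
  have hcol : ∀ b, ∑ a, M a b = x := by
    intro b
    rw [← hrow b]
    exact Finset.sum_congr rfl fun a _ => hsym.apply b a
  have hSsum : ∑ a, S a = x * σ := by
    rw [hS]
    simp only
    rw [Finset.sum_comm]
    have : ∀ b, ∑ a, M a b * z b = x * z b := by
      intro b
      rw [← Finset.sum_mul, hcol b]
    rw [Finset.sum_congr rfl fun b _ => this b, ← Finset.mul_sum, ← hσ]
  have h1 : ∀ a, ∑ b, M a b * w b = S a - x * σ / n := by
    intro a
    have : ∀ b, M a b * w b = M a b * z b - M a b * (σ / n) := by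
      intro b; rw [hw]; ring
    rw [Finset.sum_congr rfl fun b _ => this b, Finset.sum_sub_distrib, ← Finset.sum_mul,
      hrow a]
    have hSa : S a = ∑ b, M a b * z b := rfl
    rw [hSa]
    ring
  have h2 : ∑ a, w a * ∑ b, M a b * w b = (∑ a, z a * S a) - x * σ ^ 2 / n := by
    rw [Finset.sum_congr rfl fun a _ => by rw [h1 a]]
    have : ∀ a, w a * (S a - x * σ / n)
        = z a * S a - (x * σ / n) * z a - (σ / n) * S a + (σ / n) * (x * σ / n) := by
      intro a; rw [hw]; ring
    rw [Finset.sum_congr rfl fun a _ => this a]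
    rw [Finset.sum_add_distrib, Finset.sum_sub_distrib, Finset.sum_sub_distrib,
      ← Finset.mul_sum, ← Finset.mul_sum, ← hσ, hSsum, Finset.sum_const, Finset.card_univ,
      nsmul_eq_mul, ← hn]
    field_simp
    ring
  have h3 := aux_psd_quad M hpsd w
  rw [h2] at h3
  have h4 : ∑ a, z a * ∑ b, M a b * z b = ∑ a, z a * S a := rfl
  rw [h4]
  have h5 : x / n * σ ^ 2 = x * σ ^ 2 / n := by ring
  linarith [h3]

/-- the block quadratic form, expanded -/
lemma aux_block_quad [DecidableEq V] (v : V → ℝ) (M : Matrix V V ℝ) (u : Unit ⊕ V → ℝ) :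
    ∑ i, u i * ∑ j, blockN v M i j * u j
      = u (Sum.inl ()) ^ 2 + 2 * u (Sum.inl ()) * (∑ b, v b * u (Sum.inr b))
        + ∑ a, u (Sum.inr a) * ∑ b, M a b * u (Sum.inr b) := by
  rw [Fintype.sum_sum_type]
  have hunit : ∀ f : Unit → ℝ, ∑ i : Unit, f i = f () := by
    intro f; simp
  simp only [Fintype.sum_sum_type, hunit]
  simp only [blockN, Matrix.fromBlocks_apply₁₁, Matrix.fromBlocks_apply₁₂,
    Matrix.fromBlocks_apply₂₁, Matrix.fromBlocks_apply₂₂, Matrix.of_apply, Matrix.one_apply_eq]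
  rw [Finset.sum_congr rfl (fun a _ => mul_add (u (Sum.inr a)) _ _), Finset.sum_add_distrib]
  have h2 : ∑ a, u (Sum.inr a) * (v a * u (Sum.inl ()))
      = u (Sum.inl ()) * ∑ b, v b * u (Sum.inr b) := by
    rw [Finset.mul_sum]
    exact Finset.sum_congr rfl fun a _ => by ring
  rw [h2]
  ring

lemma aux_construct [DecidableEq V] [Nonempty V] (G : SimpleGraph V) (J : V → ℝ)
    (M : Matrix V V ℝ) (hM : H2Feasible G M) (x : ℝ) (hx : 0 ≤ x)
    (hrow : ∀ a, ∑ b, M a b = x) :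
    ∃ (v : V → ℝ) (Mt : Matrix V V ℝ), HFeasible G v Mt ∧
      ∑ a, J a * v a = -((∑ a, |J a|) * (Real.sqrt (Fintype.card V))⁻¹ * Real.sqrt x) := by
  obtain ⟨hsym, hpsd, hdiag, hedge⟩ := hM
  set n : ℝ := (Fintype.card V : ℝ) with hn
  have hn0 : 0 < n := by rw [hn]; exact_mod_cast Fintype.card_pos
  set t : ℝ := (Real.sqrt n)⁻¹ * Real.sqrt x with ht
  have ht2 : t ^ 2 = x / n := by
    rw [ht, mul_pow, inv_pow, Real.sq_sqrt hx, Real.sq_sqrt hn0.le]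
    ring
  set s : V → ℝ := fun a => if 0 ≤ J a then 1 else -1 with hs
  have hs2 : ∀ a, s a * s a = 1 := by
    intro a; rw [hs]; dsimp only; split <;> norm_num
  have hJs : ∀ a, J a * s a = |J a| := by
    intro a; rw [hs]; dsimp only; split
    · rw [abs_of_nonneg ‹_›]; ring
    · rw [abs_of_neg (lt_of_not_ge ‹_›)]; ring
  set Mt : Matrix V V ℝ := Matrix.of fun a b => s a * s b * M a b with hMt
  have hMtsym : Mt.IsSymm := by
    apply Matrix.IsSymm.ext
    intro i j
    simp only [hMt, Matrix.of_apply]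
    rw [hsym.apply i j]
    ring
  -- quadratic form of Mt equals that of M at rescaled vector
  have hMtquad : ∀ y : V → ℝ, ∑ a, y a * ∑ b, Mt a b * y b
      = ∑ a, (s a * y a) * ∑ b, M a b * (s b * y b) := by
    intro y
    refine Finset.sum_congr rfl fun a _ => ?_
    have : ∑ b, Mt a b * y b = s a * ∑ b, M a b * (s b * y b) := by
      rw [Finset.mul_sum]
      refine Finset.sum_congr rfl fun b _ => ?_
      simp only [hMt, Matrix.of_apply]; ring
    rw [this]; ring
  have hMtpsd : Mt.PosSemidef := by
    apply aux_psd_of_quad _ hMtsym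
    intro y
    rw [hMtquad y]
    exact aux_psd_quad M hpsd _
  set v : V → ℝ := fun a => -(t * s a) with hv
  refine ⟨v, Mt, ⟨⟨hMtsym, hMtpsd, ?_, ?_⟩, ?_⟩, ?_⟩
  · intro a
    simp only [hMt, Matrix.of_apply, hdiag a, hs2 a, mul_one]
  · intro a b hab
    simp only [hMt, Matrix.of_apply, hedge a b hab, mul_zero]
  · -- PSD of the block matrix
    apply aux_psd_of_quad
    · apply Matrix.IsSymm.ext
      intro i j
      cases i <;> cases j <;>
        simp [blockN, Matrix.fromBlocks, hMtsym.apply]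
    · intro u
      rw [aux_block_quad]
      set w0 : ℝ := u (Sum.inl ()) with hw0
      set y : V → ℝ := fun a => u (Sum.inr a) with hy
      set z : V → ℝ := fun a => s a * y a with hz
      have hvy : ∑ b, v b * y b = -(t * ∑ a, z a) := by
        rw [Finset.mul_sum, ← Finset.sum_neg_distrib]
        refine Finset.sum_congr rfl fun b _ => ?_
        simp only [hv, hz]; ring
      have hq : ∑ a, y a * ∑ b, Mt a b * y b = ∑ a, z a * ∑ b, M a b * z b := hMtquad y
      have hkey := aux_key_ineq M hpsd hsym x hrow z
      rw [hvy, hq]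
      nlinarith [sq_nonneg (w0 - t * ∑ a, z a), hkey, sq_nonneg (∑ a, z a)]
  · rw [hv]
    have : ∀ a, J a * (-(t * s a)) = -(t * |J a|) := by
      intro a; rw [← hJs a]; ring
    rw [Finset.sum_congr rfl fun a _ => this a, Finset.sum_neg_distrib, ← Finset.mul_sum, ht]
    ring

end Aux

theorem stmt2 {V : Type*} [Fintype V] [DecidableEq V] [Nonempty V]
    (G : SimpleGraph V) (hG : VertexTransitive G) (J : V → ℝ) :
    sInf {x : ℝ | ∃ (v : V → ℝ) (M : Matrix V V ℝ),
        HFeasible G v M ∧ x = ∑ a, J a * v a}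
      ≤ -((∑ a, |J a|) * (Real.sqrt (Fintype.card V))⁻¹ * Real.sqrt (lovaszTheta G)) := by
  set S : Set ℝ := {x : ℝ | ∃ (v : V → ℝ) (M : Matrix V V ℝ),
      HFeasible G v M ∧ x = ∑ a, J a * v a} with hSdef
  set T : Set ℝ := {x : ℝ | ∃ M : Matrix V V ℝ, ThetaFeasible G M ∧ x = ∑ a, ∑ b, M a b}
    with hTdef
  set c : ℝ := ∑ a, |J a| with hc
  have hc0 : 0 ≤ c := Finset.sum_nonneg fun a _ => abs_nonneg _
  set n : ℝ := (Fintype.card V : ℝ) with hn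
  have hn0 : 0 < n := by rw [hn]; exact_mod_cast Fintype.card_pos
  have hsn : 0 < Real.sqrt n := Real.sqrt_pos.mpr hn0
  -- S is bounded below by -c
  have hb : BddBelow S := by
    refine ⟨-c, fun p hp => ?_⟩
    obtain ⟨v, M, ⟨⟨_, _, hdiag, _⟩, hN⟩, rfl⟩ := hp
    have hv1 : ∀ a, |v a| ≤ 1 := by
      intro a
      have h0 := aux_psd_quad _ hN
        (Sum.elim (fun _ => (1:ℝ)) (fun b => if b = a then -(v a) else 0))
      rw [aux_block_quad] at h0
      simp only [Sum.elim_inl, Sum.elim_inr] at h0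
      have e1 : ∑ b, v b * (if b = a then -(v a) else 0) = -(v a * v a) := by
        simp [mul_ite, Finset.sum_ite_eq']
      have e2 : ∑ a', (if a' = a then -(v a) else 0)
          * ∑ b, M a' b * (if b = a then -(v a) else 0) = v a * v a := by
        have e3 : ∀ a', ∑ b, M a' b * (if b = a then -(v a) else 0) = M a' a * (-(v a)) := by
          intro a'; simp [mul_ite, Finset.sum_ite_eq']
        rw [Finset.sum_congr rfl fun a' _ => by rw [e3 a']]
        simp [Finset.sum_ite_eq', hdiag a]
      rw [e1, e2] at h0
      have : v a ^ 2 ≤ 1 := by nlinarith [h0]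
      nlinarith [abs_nonneg (v a), sq_abs (v a)]
    have : -c ≤ ∑ a, J a * v a := by
      rw [hc, ← Finset.sum_neg_distrib]
      refine Finset.sum_le_sum fun a _ => ?_
      have h1 : |J a * v a| ≤ |J a| := by
        rw [abs_mul]
        exact mul_le_of_le_one_right (abs_nonneg _) (hv1 a)
      linarith [neg_abs_le (J a * v a)]
    exact this
  -- 0 ∈ S
  have hzero : (0:ℝ) ∈ S := by
    refine ⟨0, 1, ⟨⟨Matrix.isSymm_one, Matrix.PosSemidef.one,
      fun a => Matrix.one_apply_eq a,
      fun a b hab => Matrix.one_apply_ne (G.ne_of_adj hab)⟩, ?_⟩, by simp⟩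
    have : blockN (0 : V → ℝ) (1 : Matrix V V ℝ) = 1 := by
      rw [blockN, ← Matrix.fromBlocks_one]
      congr 1
    rw [this]
    exact Matrix.PosSemidef.one
  -- main bound for each element of T
  have hmain : ∀ xx ∈ T, sInf S ≤ -(c * (Real.sqrt n)⁻¹ * Real.sqrt xx) := by
    intro xx hxx
    obtain ⟨M', hθ, hxval⟩ := hxx
    have hxx0 : 0 ≤ xx := by
      rw [hxval]; exact aux_sum_nonneg_of_psd M' hθ.2.1
    obtain ⟨M, hM, hrow⟩ := aux_exists_regular G hG M' hθ xx hxval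
    obtain ⟨v, Mt, hfeas, hval⟩ := aux_construct G J M hM xx hxx0 hrow
    have hmem : -(c * (Real.sqrt n)⁻¹ * Real.sqrt xx) ∈ S := by
      refine ⟨v, Mt, hfeas, ?_⟩
      rw [hval, hc, hn]
    exact csInf_le hb hmem
  -- T is nonempty
  have hTne : T.Nonempty := by
    refine ⟨∑ a, ∑ b, ((n⁻¹ : ℝ) • (1 : Matrix V V ℝ)) a b,
      (n⁻¹ : ℝ) • (1 : Matrix V V ℝ), ⟨?_, ?_, ?_, ?_⟩, rfl⟩
    · exact Matrix.isSymm_one.smul _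
    · exact aux_psd_smul _ Matrix.PosSemidef.one _ (by positivity)
    · rw [Matrix.trace_smul, Matrix.trace_one, smul_eq_mul, hn]
      field_simp
    · intro a b hab
      rw [Matrix.smul_apply, Matrix.one_apply_ne (G.ne_of_adj hab), smul_eq_mul, mul_zero]
  -- T consists of nonnegative reals
  have hT0 : ∀ xx ∈ T, 0 ≤ xx := by
    rintro xx ⟨M', hθ, rfl⟩
    exact aux_sum_nonneg_of_psd M' hθ.2.1
  -- conclusion
  set A : ℝ := sInf S with hA
  have hA0 : A ≤ 0 := csInf_le hb hzero
  rcases eq_or_lt_of_le hc0 with hceq | hcpos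
  · -- c = 0
    rw [← hceq]
    simp [hA0]
  · set B : ℝ := -A with hB
    have hB0 : 0 ≤ B := by rw [hB]; linarith
    set b : ℝ := B * Real.sqrt n / c with hbdef
    have hb0 : 0 ≤ b := by positivity
    have hub : ∀ xx ∈ T, xx ≤ b ^ 2 := by
      intro xx hxx
      have h1 := hmain xx hxx
      have h2 : c * (Real.sqrt n)⁻¹ * Real.sqrt xx ≤ B := by
        rw [hB]; linarith
      have h3 : Real.sqrt xx ≤ b := by
        rw [hbdef]
        rw [div_eq_mul_inv]
        have := mul_le_mul_of_nonneg_right h2 (le_of_lt (mul_pos hsn (inv_pos.mpr hcpos)))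
        calc Real.sqrt xx
            = c * (Real.sqrt n)⁻¹ * Real.sqrt xx * (Real.sqrt n * c⁻¹) := by
              field_simp
          _ ≤ B * (Real.sqrt n * c⁻¹) := by
              exact mul_le_mul_of_nonneg_right h2 (by positivity)
          _ = B * Real.sqrt n * c⁻¹ := by ring
      calc xx = Real.sqrt xx ^ 2 := (Real.sq_sqrt (hT0 xx hxx)).symm
        _ ≤ b ^ 2 := by
            have := Real.sqrt_nonneg xx
            nlinarith [h3]
    have hθle : lovaszTheta G ≤ b ^ 2 := by
      rw [lovaszTheta]
      exact csSup_le hTne hub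
    have hsq : Real.sqrt (lovaszTheta G) ≤ b := by
      calc Real.sqrt (lovaszTheta G) ≤ Real.sqrt (b ^ 2) := Real.sqrt_le_sqrt hθle
        _ = b := Real.sqrt_sq hb0
    have hfin : c * (Real.sqrt n)⁻¹ * Real.sqrt (lovaszTheta G) ≤ B := by
      have h4 : c * (Real.sqrt n)⁻¹ * Real.sqrt (lovaszTheta G)
          ≤ c * (Real.sqrt n)⁻¹ * b := by
        apply mul_le_mul_of_nonneg_left hsq (by positivity)
      have h5 : c * (Real.sqrt n)⁻¹ * b = B := by
        rw [hbdef]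
        field_simp
      linarith
    rw [hn] at hfin
    rw [show A = -B by rw [hB]; ring] at *
    linarith
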